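/- Cubic coefficient lower bound for line restrictions of the KP-II surface (case |ξ'| ≳ 1): let ξ₀, η₀, ξ₁, η₁, ξ', η' be real numbers with |ξ₀| ∈ [1/2, 2], |η₀| ≤ 2, (ξ')² + (η')² = 1 and |ξ'| ≥ c₀ > 0. Set \bar{η} = η₀ − (η'/ξ')ξ₀. Then the Taylor coefficients of t ↦ ω(ξ₀ + tξ', \tilde{η}(t)) around t = 0 (after the Galilean reduction η ↦ η − (η'/ξ')ξ) are a₂ = (ξ')² ξ₀ (3 − \bar{η}²/ξ₀⁴) and a₃ = (ξ')³ (1 + \bar{η}²/ξ₀⁴), and in particular |a₃| ≥ c₀³. -/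

import Mathlib

/-- The KP-II dispersion relation `ω(ξ,η) = ξ³ − η²/ξ`. -/
noncomputable def omegaKP (ξ η : ℝ) : ℝ := ξ ^ 3 - η ^ 2 / ξ

lemma kp_hasDeriv1 (a b c t : ℝ) (ht : a + t * b ≠ 0) :
    HasDerivAt (fun t : ℝ => (a + t * b) ^ 3 - c / (a + t * b))
      (3 * b * (a + t * b) ^ 2 + c * b / (a + t * b) ^ 2) t := by
  have hu : HasDerivAt (fun t : ℝ => a + t * b) b t := by
    simpa using ((hasDerivAt_id t).mul_const b).const_add a
  have h1 := hu.pow 3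
  have h2 := (hasDerivAt_const t c).div hu ht
  refine (h1.sub h2).congr_deriv ?_
  norm_num
  field_simp
  ring

lemma kp_hasDeriv2 (a b c t : ℝ) (ht : a + t * b ≠ 0) :
    HasDerivAt (fun t : ℝ => 3 * b * (a + t * b) ^ 2 + c * b / (a + t * b) ^ 2)
      (6 * b ^ 2 * (a + t * b) - 2 * c * b ^ 2 / (a + t * b) ^ 3) t := by
  have hu : HasDerivAt (fun t : ℝ => a + t * b) b t := by
    simpa using ((hasDerivAt_id t).mul_const b).const_add a
  have h1 := (hu.pow 2).const_mul (3 * b)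
  have h2 := (hasDerivAt_const t (c * b)).div (hu.pow 2) (pow_ne_zero 2 ht)
  refine (h1.add h2).congr_deriv ?_
  norm_num
  field_simp
  ring

lemma kp_hasDeriv3 (a b c t : ℝ) (ht : a + t * b ≠ 0) :
    HasDerivAt (fun t : ℝ => 6 * b ^ 2 * (a + t * b) - 2 * c * b ^ 2 / (a + t * b) ^ 3)
      (6 * b ^ 3 + 6 * c * b ^ 3 / (a + t * b) ^ 4) t := by
  have hu : HasDerivAt (fun t : ℝ => a + t * b) b t := by
    simpa using ((hasDerivAt_id t).mul_const b).const_add a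
  have h1 := hu.const_mul (6 * b ^ 2)
  have h2 := (hasDerivAt_const t (2 * c * b ^ 2)).div (hu.pow 3) (pow_ne_zero 3 ht)
  refine (h1.sub h2).congr_deriv ?_
  norm_num
  field_simp
  ring

/-- Cubic coefficient lower bound for line restrictions of the KP-II surface in
directions with `|ξ'| ≳ 1`: after the Galilean reduction, the quadratic and
cubic Taylor coefficients of `t ↦ ω(ξ₀ + tξ', η̄)` at `t = 0` are the stated
expressions, and the cubic one is bounded below by `c₀³`. -/
theorem flat_sets_cubic_coefficient (ξ₀ η₀ ξ' η' c₀ : ℝ)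
    (hξ₀ : |ξ₀| ∈ Set.Icc (1/2 : ℝ) 2) (hη₀ : |η₀| ≤ 2)
    (hunit : ξ' ^ 2 + η' ^ 2 = 1) (hc₀ : 0 < c₀) (hξ' : c₀ ≤ |ξ'|) :
    iteratedDeriv 2 (fun t : ℝ => omegaKP (ξ₀ + t * ξ') (η₀ - η' / ξ' * ξ₀)) 0 =
      2 * (ξ' ^ 2 * ξ₀ * (3 - (η₀ - η' / ξ' * ξ₀) ^ 2 / ξ₀ ^ 4)) ∧
    iteratedDeriv 3 (fun t : ℝ => omegaKP (ξ₀ + t * ξ') (η₀ - η' / ξ' * ξ₀)) 0 =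
      6 * (ξ' ^ 3 * (1 + (η₀ - η' / ξ' * ξ₀) ^ 2 / ξ₀ ^ 4)) ∧
    c₀ ^ 3 ≤ |ξ' ^ 3 * (1 + (η₀ - η' / ξ' * ξ₀) ^ 2 / ξ₀ ^ 4)| := by
  have hξ0 : ξ₀ ≠ 0 := by
    intro h; rw [h, abs_zero] at hξ₀; linarith [hξ₀.1]
  set c : ℝ := (η₀ - η' / ξ' * ξ₀) ^ 2 with hc
  set f : ℝ → ℝ := fun t => omegaKP (ξ₀ + t * ξ') (η₀ - η' / ξ' * ξ₀) with hf
  have hfeq : f = fun t : ℝ => (ξ₀ + t * ξ') ^ 3 - c / (ξ₀ + t * ξ') := by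
    funext t; simp [hf, omegaKP, hc]
  set g1 : ℝ → ℝ := fun t => 3 * ξ' * (ξ₀ + t * ξ') ^ 2 + c * ξ' / (ξ₀ + t * ξ') ^ 2 with hg1
  set g2 : ℝ → ℝ := fun t => 6 * ξ' ^ 2 * (ξ₀ + t * ξ') - 2 * c * ξ' ^ 2 / (ξ₀ + t * ξ') ^ 3
    with hg2
  set g3 : ℝ → ℝ := fun t => 6 * ξ' ^ 3 + 6 * c * ξ' ^ 3 / (ξ₀ + t * ξ') ^ 4 with hg3
  have hopen : IsOpen {t : ℝ | ξ₀ + t * ξ' ≠ 0} :=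
    IsOpen.preimage (by continuity) isOpen_ne
  have h0ne : ξ₀ + 0 * ξ' ≠ 0 := by simpa using hξ0
  have hmem : {t : ℝ | ξ₀ + t * ξ' ≠ 0} ∈ nhds (0 : ℝ) := hopen.mem_nhds h0ne
  have e1 : deriv f =ᶠ[nhds (0 : ℝ)] g1 := by
    filter_upwards [hmem] with t ht
    rw [hfeq]
    exact (kp_hasDeriv1 ξ₀ ξ' c t ht).deriv
  have e2 : deriv g1 =ᶠ[nhds (0 : ℝ)] g2 := by
    filter_upwards [hmem] with t ht
    exact (kp_hasDeriv2 ξ₀ ξ' c t ht).deriv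
  have e12 : deriv (deriv f) =ᶠ[nhds (0 : ℝ)] g2 := e1.deriv.trans e2
  have hit2 : iteratedDeriv 2 f = deriv (deriv f) := by
    rw [show (2 : ℕ) = 1 + 1 from rfl, iteratedDeriv_succ, iteratedDeriv_one]
  have h2 : iteratedDeriv 2 f 0 = g2 0 := by
    rw [hit2]; exact e12.eq_of_nhds
  have h3 : iteratedDeriv 3 f 0 = g3 0 := by
    rw [show (3 : ℕ) = 2 + 1 from rfl, iteratedDeriv_succ, hit2]
    rw [e12.deriv_eq]
    exact (kp_hasDeriv3 ξ₀ ξ' c 0 h0ne).deriv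
  refine ⟨?_, ?_, ?_⟩
  · rw [h2, hg2]
    simp only [zero_mul, add_zero]
    field_simp
    ring
  · rw [h3, hg3]
    simp only [zero_mul, add_zero]
    field_simp
  · have hξ4 : (0 : ℝ) < ξ₀ ^ 4 := by positivity
    have hcge : (0 : ℝ) ≤ c / ξ₀ ^ 4 := by positivity
    have h1le : (1 : ℝ) ≤ 1 + c / ξ₀ ^ 4 := by linarith
    rw [abs_mul, abs_pow, abs_of_pos (by linarith : (0:ℝ) < 1 + c / ξ₀ ^ 4)]
    calc c₀ ^ 3 = c₀ ^ 3 * 1 := by ring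
      _ ≤ |ξ'| ^ 3 * (1 + c / ξ₀ ^ 4) := by
          apply mul_le_mul (pow_le_pow_left₀ hc₀.le hξ' 3) h1le zero_le_one (by positivity)
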